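/- For every real λ and every real x, the function f(t) = t·coth(t) satisfies: the expression λ·(t² − sinh(t)²) − 2·(t² − t·sinh(t)·cosh(t)) is zero at t = 0, and for λ ≤ 4 it has no nonzero real root, i.e., if t ≠ 0 and λ ≤ 4 then λ·(t² − sinh(t)²) − 2·(t² − t·sinh(t)·cosh(t)) ≠ 0 (in fact it is positive for t ≠ 0). -/

import Mathlib

open Real

lemma aux_pos (F F' : ℝ → ℝ) (h0 : F 0 = 0) (hd : ∀ x, HasDerivAt F (F' x) x)
    (hpos : ∀ x, 0 < x → 0 < F' x) : ∀ x, 0 < x → 0 < F x := by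
  intro x hx
  have hmono : StrictMonoOn F (Set.Ici 0) := by
    apply strictMonoOn_of_deriv_pos (convex_Ici 0)
    · exact fun y _ => (hd y).continuousAt.continuousWithinAt
    · intro y hy
      rw [interior_Ici] at hy
      rw [(hd y).deriv]
      exact hpos y hy
  have := hmono (Set.mem_Ici.mpr le_rfl) (Set.mem_Ici.mpr hx.le) hx
  simpa [h0] using this

lemma F1_pos : ∀ x : ℝ, 0 < x → 0 < x * Real.cosh x - Real.sinh x := by
  apply aux_pos _ (fun x => x * Real.sinh x)
  · simp
  · intro x
    have h := ((hasDerivAt_id x).mul (Real.hasDerivAt_cosh x)).sub (Real.hasDerivAt_sinh x)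
    refine h.congr_deriv ?_
    simp only [id_eq]
    ring
  · intro x hx
    exact mul_pos hx (Real.sinh_pos_iff.mpr hx)

lemma g2_pos : ∀ x : ℝ, 0 < x →
    0 < 4 - 4 * (Real.cosh x ^ 2 + Real.sinh x ^ 2) + 8 * x * (Real.sinh x * Real.cosh x) := by
  apply aux_pos _ (fun x => 8 * (x * (Real.cosh x ^ 2 + Real.sinh x ^ 2) - Real.sinh x * Real.cosh x))
  · simp
  · intro x
    have h := ((hasDerivAt_const x (4:ℝ)).sub
        (((Real.hasDerivAt_cosh x).pow 2).add ((Real.hasDerivAt_sinh x).pow 2) |>.const_mul 4)).add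
        ((((hasDerivAt_id x).const_mul (8:ℝ)).mul
          ((Real.hasDerivAt_sinh x).mul (Real.hasDerivAt_cosh x))))
    refine h.congr_deriv ?_
    simp only [id_eq, Pi.mul_apply, Pi.add_apply, Pi.pow_apply]
    ring
  · intro x hx
    have h1 := F1_pos x hx
    have hc : 0 < Real.cosh x := Real.cosh_pos x
    have hs : 0 ≤ Real.sinh x := (Real.sinh_pos_iff.mpr hx).le
    have : Real.sinh x * Real.cosh x < x * (Real.cosh x ^ 2 + Real.sinh x ^ 2) := by
      calc Real.sinh x * Real.cosh x < (x * Real.cosh x) * Real.cosh x := by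
            apply mul_lt_mul_of_pos_right _ hc
            linarith
        _ ≤ x * (Real.cosh x ^ 2 + Real.sinh x ^ 2) := by nlinarith [sq_nonneg (Real.sinh x)]
    linarith

lemma g1_pos : ∀ x : ℝ, 0 < x →
    0 < 4 * x - 6 * (Real.sinh x * Real.cosh x) + 2 * x * (Real.cosh x ^ 2 + Real.sinh x ^ 2) := by
  apply aux_pos _ (fun x => 4 - 4 * (Real.cosh x ^ 2 + Real.sinh x ^ 2) + 8 * x * (Real.sinh x * Real.cosh x))
  · simp
  · intro x
    have h := (((hasDerivAt_id x).const_mul (4:ℝ)).sub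
        (((Real.hasDerivAt_sinh x).mul (Real.hasDerivAt_cosh x)).const_mul 6)).add
        ((((hasDerivAt_id x).const_mul (2:ℝ)).mul
          (((Real.hasDerivAt_cosh x).pow 2).add ((Real.hasDerivAt_sinh x).pow 2))))
    refine h.congr_deriv ?_
    simp only [id_eq, Pi.mul_apply, Pi.add_apply, Pi.pow_apply]
    ring
  · exact g2_pos

lemma g0_pos : ∀ x : ℝ, 0 < x →
    0 < 2 * x ^ 2 - 4 * Real.sinh x ^ 2 + 2 * x * (Real.sinh x * Real.cosh x) := by
  apply aux_pos _ (fun x => 4 * x - 6 * (Real.sinh x * Real.cosh x) + 2 * x * (Real.cosh x ^ 2 + Real.sinh x ^ 2))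
  · simp
  · intro x
    have h := ((((hasDerivAt_id x).pow 2).const_mul (2:ℝ)).sub
        (((Real.hasDerivAt_sinh x).pow 2).const_mul 4)).add
        ((((hasDerivAt_id x).const_mul (2:ℝ)).mul
          ((Real.hasDerivAt_sinh x).mul (Real.hasDerivAt_cosh x))))
    refine h.congr_deriv ?_
    simp only [id_eq, Pi.mul_apply, Pi.add_apply, Pi.pow_apply]
    ring
  · exact g1_pos

lemma g0_pos' : ∀ x : ℝ, x ≠ 0 →
    0 < 2 * x ^ 2 - 4 * Real.sinh x ^ 2 + 2 * x * (Real.sinh x * Real.cosh x) := by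
  intro x hx
  rcases hx.lt_or_gt with h | h
  · have := g0_pos (-x) (by linarith)
    simpa [Real.sinh_neg, Real.cosh_neg] using this
  · exact g0_pos x h

theorem stmt_0 (lam : ℝ) :
    (lam * ((0:ℝ)^2 - Real.sinh 0 ^ 2) - 2 * ((0:ℝ)^2 - 0 * Real.sinh 0 * Real.cosh 0) = 0) ∧
    (∀ t : ℝ, t ≠ 0 → lam ≤ 4 →
      0 < lam * (t^2 - Real.sinh t ^ 2) - 2 * (t^2 - t * Real.sinh t * Real.cosh t)) := by
  constructor
  · simp
  · intro t ht hlam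
    have hg := g0_pos' t ht
    have hsq : t ^ 2 < Real.sinh t ^ 2 := by
      rcases ht.lt_or_gt with h | h
      · have := Real.self_lt_sinh_iff.mpr (show (0:ℝ) < -t by linarith)
        rw [Real.sinh_neg] at this
        nlinarith [this]
      · have := Real.self_lt_sinh_iff.mpr h
        nlinarith [this]
    have hneg : t ^ 2 - Real.sinh t ^ 2 < 0 := by linarith
    have : 4 * (t ^ 2 - Real.sinh t ^ 2) ≤ lam * (t ^ 2 - Real.sinh t ^ 2) :=
      mul_le_mul_of_nonpos_right hlam hneg.le
    nlinarith
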